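/- arXiv:1611.00756 — 4 statements merged into one kernel-verified Lean document; each statement's English description precedes it below -/
import Mathlib

section
/- Let f be L₁-smooth. The function ρ(x) = L₁·(max(‖x‖ - α/L₂, 0))² is convex, and its gradient ∇ρ(x) = 2L₁·(x/‖x‖)·max(‖x‖ - α/L₂, 0) (interpreted as 0 when ‖x‖ ≤ α/L₂) is 4L₁-Lipschitz continuous. -/
open scoped RealInnerProductSpace


lemma aux_proj {d : ℕ} (c : ℝ) (hc : 0 ≤ c) (x y : EuclideanSpace ℝ (Fin d))
    (hx : c ≤ ‖x‖) (hy : c ≤ ‖y‖) :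
    ‖(c / ‖x‖) • x - (c / ‖y‖) • y‖ ≤ ‖x - y‖ := by
  rcases eq_or_lt_of_le hc with rfl | hc'
  · simp
  have ha : 0 < ‖x‖ := lt_of_lt_of_le hc' hx
  have hb : 0 < ‖y‖ := lt_of_lt_of_le hc' hy
  have key : ‖(c / ‖x‖) • x - (c / ‖y‖) • y‖ ^ 2 ≤ ‖x - y‖ ^ 2 := by
    rw [norm_sub_sq_real, norm_sub_sq_real, norm_smul, norm_smul,
      real_inner_smul_left, real_inner_smul_right]
    rw [Real.norm_eq_abs, Real.norm_eq_abs, abs_of_nonneg (div_nonneg hc ha.le),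
      abs_of_nonneg (div_nonneg hc hb.le)]
    have h1 : c / ‖x‖ * ‖x‖ = c := div_mul_cancel₀ _ ha.ne'
    have h2 : c / ‖y‖ * ‖y‖ = c := div_mul_cancel₀ _ hb.ne'
    rw [mul_pow, mul_pow]
    have ht : ⟪x, y⟫ ≤ ‖x‖ * ‖y‖ := real_inner_le_norm x y
    set a := ‖x‖; set b := ‖y‖; set t := ⟪x, y⟫
    have hu1 : c / a ≤ 1 := (div_le_one ha).2 hx
    have hv1 : c / b ≤ 1 := (div_le_one hb).2 hy
    have hu0 : 0 ≤ c / a := div_nonneg hc ha.le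
    have hv0 : 0 ≤ c / b := div_nonneg hc hb.le
    have huv : (c / a) * (c / b) * (a * b) = c ^ 2 := by field_simp
    nlinarith [sq_nonneg (a - b), mul_nonneg (sub_nonneg.2 ht)
      (sub_nonneg.2 (mul_le_one₀ hu1 hv0 hv1)),
      mul_le_one₀ hu1 hv0 hv1]
  calc ‖(c / ‖x‖) • x - (c / ‖y‖) • y‖
      = Real.sqrt (‖(c / ‖x‖) • x - (c / ‖y‖) • y‖ ^ 2) := (Real.sqrt_sq (norm_nonneg _)).symm
    _ ≤ Real.sqrt (‖x - y‖ ^ 2) := Real.sqrt_le_sqrt key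
    _ = ‖x - y‖ := Real.sqrt_sq (norm_nonneg _)

lemma aux_phi {d : ℕ} (c : ℝ) (hc : 0 ≤ c) (x y : EuclideanSpace ℝ (Fin d)) :
    ‖(max (‖x‖ - c) 0 / ‖x‖) • x - (max (‖y‖ - c) 0 / ‖y‖) • y‖ ≤ 2 * ‖x - y‖ := by
  have hzero : ∀ z : EuclideanSpace ℝ (Fin d), ‖z‖ ≤ c →
      (max (‖z‖ - c) 0 / ‖z‖) • z = 0 := by
    intro z hz
    rw [max_eq_right (sub_nonpos.2 hz)]
    simp
  have hnorm : ∀ z : EuclideanSpace ℝ (Fin d), c < ‖z‖ →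
      ‖(max (‖z‖ - c) 0 / ‖z‖) • z‖ = ‖z‖ - c := by
    intro z hz
    have hz0 : 0 < ‖z‖ := lt_of_le_of_lt hc hz
    rw [max_eq_left (sub_nonneg.2 hz.le), norm_smul, Real.norm_eq_abs,
      abs_of_nonneg (div_nonneg (sub_nonneg.2 hz.le) hz0.le), div_mul_cancel₀ _ hz0.ne']
  rcases le_or_gt ‖x‖ c with hx | hx <;> rcases le_or_gt ‖y‖ c with hy | hy
  · rw [hzero x hx, hzero y hy]
    simp [norm_nonneg]
  · rw [hzero x hx, zero_sub, norm_neg, hnorm y hy]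
    have h1 : ‖y‖ - ‖x‖ ≤ ‖y - x‖ := norm_sub_norm_le y x
    rw [norm_sub_rev] at h1
    nlinarith [norm_nonneg (x - y)]
  · rw [hzero y hy, sub_zero, hnorm x hx]
    have h1 : ‖x‖ - ‖y‖ ≤ ‖x - y‖ := norm_sub_norm_le x y
    nlinarith [norm_nonneg (x - y)]
  · have hx0 : 0 < ‖x‖ := lt_of_le_of_lt hc hx
    have hy0 : 0 < ‖y‖ := lt_of_le_of_lt hc hy
    have hxe : (max (‖x‖ - c) 0 / ‖x‖) • x = x - (c / ‖x‖) • x := by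
      rw [max_eq_left (sub_nonneg.2 hx.le), sub_div, div_self hx0.ne', sub_smul, one_smul]
    have hye : (max (‖y‖ - c) 0 / ‖y‖) • y = y - (c / ‖y‖) • y := by
      rw [max_eq_left (sub_nonneg.2 hy.le), sub_div, div_self hy0.ne', sub_smul, one_smul]
    rw [hxe, hye, sub_sub_sub_comm]
    calc ‖(x - y) - ((c / ‖x‖) • x - (c / ‖y‖) • y)‖
        ≤ ‖x - y‖ + ‖(c / ‖x‖) • x - (c / ‖y‖) • y‖ := norm_sub_le _ _
      _ ≤ ‖x - y‖ + ‖x - y‖ := by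
          have := aux_proj c hc x y hx.le hy.le
          linarith
      _ = 2 * ‖x - y‖ := by ring


lemma aux_grad {d : ℕ} (c L₁ : ℝ) (hc : 0 ≤ c) (hL₁ : 0 < L₁)
    (x : EuclideanSpace ℝ (Fin d)) :
    HasGradientAt (fun y : EuclideanSpace ℝ (Fin d) => L₁ * max (‖y‖ - c) 0 ^ 2)
      ((2 * L₁ * max (‖x‖ - c) 0 / ‖x‖) • x) x := by
  rw [hasGradientAt_iff_hasFDerivAt]
  rcases le_or_gt ‖x‖ c with hx | hx
  · -- gradient is 0
    have hx0 : (2 * L₁ * max (‖x‖ - c) 0 / ‖x‖) • x = 0 := by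
      rw [max_eq_right (sub_nonpos.2 hx)]
      simp
    rw [hx0, map_zero]
    rw [hasFDerivAt_iff_isLittleO_nhds_zero, Asymptotics.isLittleO_iff]
    intro ε hε
    have hev : ∀ᶠ h in nhds (0 : EuclideanSpace ℝ (Fin d)), ‖h‖ ≤ ε / L₁ := by
      filter_upwards [Metric.closedBall_mem_nhds (0 : EuclideanSpace ℝ (Fin d))
        (div_pos hε hL₁)] with h hh
      simpa [dist_eq_norm] using hh
    filter_upwards [hev] with h hh
    have hmx : max (‖x‖ - c) 0 = 0 := max_eq_right (sub_nonpos.2 hx)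
    have hm : max (‖x + h‖ - c) 0 ≤ ‖h‖ := by
      apply max_le _ (norm_nonneg _)
      have := norm_add_le x h
      linarith
    have hm0 : 0 ≤ max (‖x + h‖ - c) 0 := le_max_right _ _
    simp only [ContinuousLinearMap.zero_apply, sub_zero, hmx]
    rw [Real.norm_eq_abs]
    rw [abs_of_nonneg (by nlinarith [hm0, sq_nonneg (max (‖x + h‖ - c) 0)] : (0:ℝ) ≤ L₁ * max (‖x + h‖ - c) 0 ^ 2 - L₁ * 0 ^ 2)]
    have h2 : L₁ * ‖h‖ ≤ ε := by
      rw [mul_comm, ← le_div_iff₀ hL₁]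
      exact hh
    nlinarith [mul_nonneg (sub_nonneg.2 h2) (norm_nonneg h),
      mul_le_mul hm hm hm0 (norm_nonneg h)]
  · -- smooth region
    have hx0 : 0 < ‖x‖ := lt_of_le_of_lt hc hx
    have hne : (‖x‖ : ℝ) ^ 2 ≠ 0 := pow_ne_zero _ hx0.ne'
    have hs : Real.sqrt (‖x‖ ^ 2) = ‖x‖ := Real.sqrt_sq (norm_nonneg x)
    have h1 : HasFDerivAt (fun y : EuclideanSpace ℝ (Fin d) => ‖y‖ ^ 2)
        (2 • (innerSL ℝ x)) x := (hasStrictFDerivAt_norm_sq x).hasFDerivAt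
    have h2 : HasDerivAt (fun t : ℝ => L₁ * (Real.sqrt t - c) ^ 2)
        (L₁ * ((‖x‖ - c) / ‖x‖)) (‖x‖ ^ 2) := by
      have hsq := Real.hasDerivAt_sqrt hne
      have := (((hsq.sub_const c).pow 2).const_mul L₁)
      refine this.congr_deriv ?_
      rw [hs]
      field_simp
      ring
    have h3 := h2.comp_hasFDerivAt x h1
    have h4 : (fun y : EuclideanSpace ℝ (Fin d) => L₁ * max (‖y‖ - c) 0 ^ 2)
        =ᶠ[nhds x] ((fun t : ℝ => L₁ * (Real.sqrt t - c) ^ 2) ∘ fun y => ‖y‖ ^ 2) := by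
      have hopen : IsOpen {y : EuclideanSpace ℝ (Fin d) | c < ‖y‖} :=
        isOpen_lt continuous_const continuous_norm
      filter_upwards [hopen.mem_nhds hx] with y hy
      simp only [Function.comp_apply, Real.sqrt_sq (norm_nonneg y),
        max_eq_left (sub_nonneg.2 (le_of_lt hy))]
    have h5 := h3.congr_of_eventuallyEq h4
    refine h5.congr_fderiv ?_
    ext y
    simp only [InnerProductSpace.toDual_apply_apply, ContinuousLinearMap.smul_apply,
      ContinuousLinearMap.coe_smul', Pi.smul_apply, innerSL_apply_apply, real_inner_smul_left,
      smul_eq_mul, max_eq_left (sub_nonneg.2 hx.le)]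
    ring


lemma aux_convex {d : ℕ} (c L₁ : ℝ) (hL₁ : 0 < L₁) :
    ConvexOn ℝ Set.univ (fun x : EuclideanSpace ℝ (Fin d) => L₁ * max (‖x‖ - c) 0 ^ 2) := by
  have hf : ConvexOn ℝ Set.univ (fun x : EuclideanSpace ℝ (Fin d) => max (‖x‖ - c) 0) :=
    ((convexOn_norm convex_univ).sub (concaveOn_const c convex_univ)).sup
      (convexOn_const 0 convex_univ)
  refine ⟨convex_univ, fun x _ y _ a b ha hb hab => ?_⟩
  have h1 := hf.2 (Set.mem_univ x) (Set.mem_univ y) ha hb hab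
  simp only [Pi.sup_apply] at h1 ⊢
  set mx := max (‖x‖ - c) 0
  set my := max (‖y‖ - c) 0
  set mz := max (‖a • x + b • y‖ - c) 0
  have hmx : 0 ≤ mx := le_max_right _ _
  have hmy : 0 ≤ my := le_max_right _ _
  have hmz : 0 ≤ mz := le_max_right _ _
  have h2 : mz ≤ a * mx + b * my := by simpa [smul_eq_mul] using h1
  have h3 : mz ^ 2 ≤ (a * mx + b * my) ^ 2 := by nlinarith
  have h4 : (a * mx + b * my) ^ 2 ≤ a * mx ^ 2 + b * my ^ 2 := by
    nlinarith [mul_nonneg (mul_nonneg ha hb) (sq_nonneg (mx - my))]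
  simp only [smul_eq_mul]
  nlinarith

/-- The function `ρ x = L₁ (max (‖x‖ - α/L₂) 0)²` is convex, its gradient is
`∇ρ x = 2 L₁ (max (‖x‖ - α/L₂) 0 / ‖x‖) • x` (interpreted as `0` when `‖x‖ ≤ α/L₂`),
and this gradient is `4 L₁`-Lipschitz. -/
theorem stmt_5 {d : ℕ} (α L₁ L₂ : ℝ) (hα : 0 ≤ α) (hL₁ : 0 < L₁) (hL₂ : 0 < L₂)
    (ρ : EuclideanSpace ℝ (Fin d) → ℝ)
    (hρ : ∀ x, ρ x = L₁ * max (‖x‖ - α / L₂) 0 ^ 2)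
    (ρ' : EuclideanSpace ℝ (Fin d) → EuclideanSpace ℝ (Fin d))
    (hρ' : ∀ x, ρ' x = (2 * L₁ * max (‖x‖ - α / L₂) 0 / ‖x‖) • x) :
    ConvexOn ℝ Set.univ ρ ∧ (∀ x, HasGradientAt ρ (ρ' x) x) ∧
      ∀ x y, ‖ρ' x - ρ' y‖ ≤ 4 * L₁ * ‖x - y‖ := by
  set c : ℝ := α / L₂ with hcdef
  have hc : 0 ≤ c := div_nonneg hα hL₂.le
  have hρeq : ρ = fun x : EuclideanSpace ℝ (Fin d) => L₁ * max (‖x‖ - c) 0 ^ 2 :=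
    funext hρ
  refine ⟨?_, ?_, ?_⟩
  · rw [hρeq]
    exact aux_convex c L₁ hL₁
  · intro x
    rw [hρeq, hρ' x]
    exact aux_grad c L₁ hc hL₁ x
  · intro x y
    rw [hρ' x, hρ' y]
    have hx : (2 * L₁ * max (‖x‖ - c) 0 / ‖x‖) • x
        = (2 * L₁) • ((max (‖x‖ - c) 0 / ‖x‖) • x) := by
      rw [smul_smul, mul_div_assoc]
    have hy : (2 * L₁ * max (‖y‖ - c) 0 / ‖y‖) • y
        = (2 * L₁) • ((max (‖y‖ - c) 0 / ‖y‖) • y) := by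
      rw [smul_smul, mul_div_assoc]
    rw [hx, hy, ← smul_sub, norm_smul, Real.norm_eq_abs,
      abs_of_nonneg (by positivity : (0:ℝ) ≤ 2 * L₁)]
    have := aux_phi c hc x y
    nlinarith [norm_nonneg (x - y)]
end

section
/- Let f : ℝ^d → ℝ be L₁-smooth with L₂-Lipschitz Hessian, and suppose ∇²f(x₀) ⪰ -αI for some α ≥ 0 and point x₀. Then the function f_α(x) = f(x) + L₁·(max(‖x - x₀‖ - α/L₂, 0))² is 3α-almost convex, i.e., f_α(y) - f_α(x) - ⟨∇f_α(x), y - x⟩ ≥ -(3α/2)‖y - x‖² for all x, y, and ∇f_α is 5L₁-Lipschitz. -/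
open scoped RealInnerProductSpace

lemma taylor_lb' {φ φ₁ φ₂ : ℝ → ℝ} {K : ℝ}
    (hφ : ∀ t, HasDerivAt φ (φ₁ t) t)
    (hφ₁ : ∀ t, HasDerivAt φ₁ (φ₂ t) t)
    (hK : ∀ t ∈ Set.Ioo (0:ℝ) 1, -K ≤ φ₂ t) :
    -(K/2) ≤ φ 1 - φ 0 - φ₁ 0 := by
  have hψ : ∀ t, HasDerivAt (fun s => φ s + K * s^2 / 2) (φ₁ t + K * t) t := by
    intro t
    have h2 : HasDerivAt (fun s : ℝ => K * s^2 / 2) (K * t) t := by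
      have := ((hasDerivAt_pow 2 t).const_mul K).div_const 2
      simpa using this.congr_deriv (by ring)
    exact (hφ t).add h2
  have hψ₁ : ∀ t, HasDerivAt (fun s => φ₁ s + K * s) (φ₂ t + K) t := by
    intro t
    exact (hφ₁ t).add (by simpa using (hasDerivAt_id t).const_mul K)
  obtain ⟨c, hc, hceq⟩ := exists_hasDerivAt_eq_slope (fun s => φ s + K * s^2 / 2)
    (fun s => φ₁ s + K * s) one_pos
    (fun t _ => (hψ t).continuousAt.continuousWithinAt) (fun t _ => hψ t)
  obtain ⟨e, he, heeq⟩ := exists_hasDerivAt_eq_slope (fun s => φ₁ s + K * s)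
    (fun s => φ₂ s + K) hc.1
    (fun t _ => (hψ₁ t).continuousAt.continuousWithinAt) (fun t _ => hψ₁ t)
  have he' : e ∈ Set.Ioo (0:ℝ) 1 := ⟨he.1, he.2.trans hc.2⟩
  have h1 : 0 ≤ φ₂ e + K := by have := hK e he'; linarith
  have hc0 : (0:ℝ) < c := hc.1
  have key : φ₁ c + K * c - (φ₁ 0 + K * 0) = (φ₂ e + K) * c := by
    rw [heeq, sub_zero, div_mul_cancel₀ _ hc0.ne']
  have key2 : φ₁ c + K * c = (φ 1 + K * 1^2/2) - (φ 0 + K * 0^2/2) := by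
    field_simp at hceq; linarith [hceq]
  nlinarith [mul_nonneg h1 hc0.le]

lemma alg1' (r sp sq t : ℝ) (hr : 0 ≤ r) (hsp : 0 ≤ sp) (hsq : 0 ≤ sq)
    (ht : |t| ≤ sp * sq) :
    0 ≤ max (sq - r) 0 ^ 2 - max (sp - r) 0 ^ 2 - 2 * (max (sp - r) 0 / sp) * (t - sp^2) := by
  rcases le_total sp r with hspr | hspr
  · rw [max_eq_right (by linarith : sp - r ≤ 0)]
    simp only [div_zero, zero_div, ne_eq, OfNat.ofNat_ne_zero, not_false_eq_true, zero_pow,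
      mul_zero, zero_mul, sub_zero]
    positivity
  rcases eq_or_lt_of_le hsp with h0 | hsp0
  · have : r = 0 := le_antisymm (h0 ▸ hspr) hr
    rw [max_eq_left (by linarith : 0 ≤ sp - r)]
    simp only [← h0, this]
    simp
  · rw [max_eq_left (by linarith : 0 ≤ sp - r)]
    rw [abs_le] at ht
    have hmq : sq - r ≤ max (sq - r) 0 := le_max_left _ _
    have hmq0 : 0 ≤ max (sq - r) 0 := le_max_right _ _
    have key : t - sp^2 ≤ sp * max (sq - r) 0 - sp * (sp - r) := by
      nlinarith [mul_le_mul_of_nonneg_left hmq hsp]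
    have hexp : max (sq - r) 0 ^ 2 - (sp - r) ^ 2 - 2 * ((sp - r) / sp) * (t - sp ^ 2)
        = ((max (sq - r) 0 ^ 2 - (sp - r) ^ 2) * sp - 2 * (sp - r) * (t - sp^2)) / sp := by
      field_simp
    rw [hexp]
    apply div_nonneg _ hsp0.le
    nlinarith [sq_nonneg (max (sq - r) 0 - (sp - r)),
      mul_le_mul_of_nonneg_left key (by linarith : (0:ℝ) ≤ 2 * (sp - r))]

set_option maxHeartbeats 1000000 in
lemma alg2' (r sp sq t : ℝ) (hr : 0 ≤ r) (hsp : 0 ≤ sp) (hsq : 0 ≤ sq)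
    (ht : |t| ≤ sp * sq) (hM : 2*r ≤ max sp sq) :
    (max sp sq - 2*r) * (sp^2 + sq^2 - 2*t)
      ≤ 2 * (max (sq - r) 0 ^ 2 - max (sp - r) 0 ^ 2
          - 2 * (max (sp - r) 0 / sp) * (t - sp^2)) * (max sp sq + r) := by
  rw [abs_le] at ht
  rcases le_total sp r with hspr | hrsp
  · rw [max_eq_right (by linarith : sp - r ≤ 0)]
    rcases le_total sq sp with hqp | hpq
    · rw [max_eq_left hqp] at hM ⊢
      have hr0 : r = 0 := by linarith
      have hsp0 : sp = 0 := by linarith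
      have hsq0 : sq = 0 := by linarith
      have ht0 : t = 0 := by rw [hsp0] at ht; simp at ht; linarith [ht.1, ht.2]
      subst hr0 hsp0 hsq0 ht0; norm_num
    · rw [max_eq_right hpq] at hM ⊢
      rw [max_eq_left (by linarith : 0 ≤ sq - r)]
      simp only [ne_eq, OfNat.ofNat_ne_zero, not_false_eq_true, zero_pow, zero_div, mul_zero,
        zero_mul, sub_zero]
      nlinarith [mul_nonneg (mul_nonneg (sub_nonneg.2 hspr) (by linarith : (0:ℝ) ≤ sq - 2*r)) (by linarith : (0:ℝ) ≤ sp + sq),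
        mul_nonneg (by linarith : (0:ℝ) ≤ sq - 2*r) (by linarith : (0:ℝ) ≤ sp*sq - t),
        mul_nonneg (by linarith : (0:ℝ) ≤ sq + r) (sq_nonneg (2*sq - 3*r)),
        mul_nonneg (mul_nonneg hr (by linarith : (0:ℝ) ≤ sq - 2*r)) (by linarith : (0:ℝ) ≤ r - sp)]
  · rw [max_eq_left (by linarith : 0 ≤ sp - r)]
    rcases eq_or_lt_of_le hsp with h0 | hsp0
    · have hr0 : r = 0 := by linarith
      have ht0 : t = 0 := by rw [← h0] at ht; simp at ht; linarith [ht.1, ht.2]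
      rw [← h0, hr0, ht0]
      rw [max_eq_right (by linarith : (0:ℝ) ≤ sq), max_eq_left (by linarith : sq - 0 ≥ 0)]
      simp
      nlinarith [pow_nonneg hsq 3]
    · have hexp : 2 * (max (sq - r) 0 ^ 2 - (sp - r) ^ 2 - 2 * ((sp - r) / sp) * (t - sp^2))
            * (max sp sq + r)
          = (2 * ((max (sq - r) 0 ^ 2 - (sp - r) ^ 2) * sp - 2 * (sp - r) * (t - sp^2))
            * (max sp sq + r)) / sp := by
        field_simp
      rw [hexp, le_div_iff₀ hsp0]
      rcases le_total sq sp with hqp | hpq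
      · rw [max_eq_left hqp] at hM ⊢
        rcases le_total r sq with hrq | hqr
        · rw [max_eq_left (by linarith : 0 ≤ sq - r)]
          nlinarith [mul_nonneg (by linarith : (0:ℝ) ≤ sp - 2*r) (by linarith : (0:ℝ) ≤ sp*sq - t),
            mul_nonneg (by linarith : (0:ℝ) ≤ sp - r) (by linarith : (0:ℝ) ≤ sp*sq - t),
            mul_nonneg (mul_nonneg hr (by linarith : (0:ℝ) ≤ sp - 2*r)) (by linarith : (0:ℝ) ≤ sp*sq - t),
            mul_nonneg (mul_nonneg hr hr) (by linarith : (0:ℝ) ≤ sp - sq),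
            mul_nonneg (mul_nonneg hr (by linarith : (0:ℝ) ≤ sp - sq)) (by linarith : (0:ℝ) ≤ sq - r),
            sq_nonneg (sp - sq), sq_nonneg (sp + sq - 2*r), mul_nonneg hr (sq_nonneg (sp - sq))]
        · rw [max_eq_right (by linarith : sq - r ≤ 0)]
          nlinarith [mul_nonneg (by linarith : (0:ℝ) ≤ sp - 2*r) (by linarith : (0:ℝ) ≤ sp*sq - t),
            mul_nonneg (by linarith : (0:ℝ) ≤ sp - r) (by linarith : (0:ℝ) ≤ sp*sq - t),
            mul_nonneg (mul_nonneg hr (by linarith : (0:ℝ) ≤ sp - 2*r)) (by linarith : (0:ℝ) ≤ sp*sq - t),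
            mul_nonneg (mul_nonneg hr (by linarith : (0:ℝ) ≤ r - sq)) (by linarith : (0:ℝ) ≤ sp),
            mul_nonneg (mul_nonneg (by linarith : (0:ℝ) ≤ sp) (by linarith : (0:ℝ) ≤ r - sq)) (by linarith : (0:ℝ) ≤ sp - 2*r),
            mul_nonneg (mul_nonneg (by linarith : (0:ℝ) ≤ sp) (by linarith : (0:ℝ) ≤ r - sq)) (by linarith : (0:ℝ) ≤ sp + sq),
            sq_nonneg (sp - 2*r), mul_nonneg hr hr]
      · rw [max_eq_right hpq] at hM ⊢
        rw [max_eq_left (by linarith : 0 ≤ sq - r)]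
        have hsq0 : 0 < sq := lt_of_lt_of_le hsp0 hpq
        have hDp : 0 ≤ sp * (sq - sp)^2 * (sq + 4*r) := by positivity
        have hDm : 0 ≤ sp * ((sp + sq)^2 * (sq + 4*r) - 8*r*sq*(sq + r)) := by
          apply mul_nonneg hsp
          nlinarith [mul_nonneg (mul_nonneg (by linarith : (0:ℝ) ≤ sp - r) (by linarith : (0:ℝ) ≤ sp + r + 2*sq)) (by linarith : (0:ℝ) ≤ sq + 4*r),
            mul_nonneg (by linarith : (0:ℝ) ≤ sq + r) (sq_nonneg (2*sq - 3*r)),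
            mul_nonneg (by linarith : (0:ℝ) ≤ sq + r) (mul_self_nonneg r)]
        have hkey : 0 ≤ 2*(sp*sq) * (2 * (((sq - r)^2 - (sp - r)^2) * sp - 2*(sp - r)*(t - sp^2)) * (sq + r)
              - (sq - 2*r) * (sp^2 + sq^2 - 2*t) * sp) := by
          have hid : 2*(sp*sq) * (2 * (((sq - r)^2 - (sp - r)^2) * sp - 2*(sp - r)*(t - sp^2)) * (sq + r)
                - (sq - 2*r) * (sp^2 + sq^2 - 2*t) * sp)
              = (sp * (sq - sp)^2 * (sq + 4*r)) * (sp*sq + t)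
                + (sp * ((sp + sq)^2 * (sq + 4*r) - 8*r*sq*(sq + r))) * (sp*sq - t) := by
            ring
          rw [hid]
          have h1 : (0:ℝ) ≤ sp*sq + t := by linarith
          have h2 : (0:ℝ) ≤ sp*sq - t := by linarith
          exact add_nonneg (mul_nonneg hDp h1) (mul_nonneg hDm h2)
        nlinarith [mul_pos hsp0 hsq0, hkey]

set_option maxHeartbeats 0 in
/-- If `f` is `L₁`-smooth with `L₂`-Lipschitz Hessian and `∇²f(x₀) ⪰ -α I`, then
`f_α x = f x + L₁ (max (‖x - x₀‖ - α/L₂) 0)²` is `3α`-almost convex and its gradient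
is `5 L₁`-Lipschitz. -/
theorem stmt_6 {d : ℕ} (f : EuclideanSpace ℝ (Fin d) → ℝ)
    (f' : EuclideanSpace ℝ (Fin d) → EuclideanSpace ℝ (Fin d))
    (f'' : EuclideanSpace ℝ (Fin d) → EuclideanSpace ℝ (Fin d) →L[ℝ] EuclideanSpace ℝ (Fin d))
    (L₁ L₂ α : ℝ) (hL₁ : 0 < L₁) (hL₂ : 0 < L₂) (hα : 0 ≤ α)
    (hgrad : ∀ x, HasGradientAt f (f' x) x)
    (hgradlip : ∀ x y, ‖f' x - f' y‖ ≤ L₁ * ‖x - y‖)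
    (hhess : ∀ x, HasFDerivAt f' (f'' x) x)
    (hhesscont : Continuous f'')
    (hhesslip : ∀ x y, ‖f'' x - f'' y‖ ≤ L₂ * ‖x - y‖)
    (x₀ : EuclideanSpace ℝ (Fin d))
    (hpsd : ∀ v, ⟪v, f'' x₀ v⟫ ≥ -α * ‖v‖ ^ 2)
    (fα : EuclideanSpace ℝ (Fin d) → ℝ)
    (hfα : ∀ x, fα x = f x + L₁ * max (‖x - x₀‖ - α / L₂) 0 ^ 2)
    (fα' : EuclideanSpace ℝ (Fin d) → EuclideanSpace ℝ (Fin d))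
    (hfα' : ∀ x, fα' x =
      f' x + (2 * L₁ * max (‖x - x₀‖ - α / L₂) 0 / ‖x - x₀‖) • (x - x₀)) :
    (∀ x y, fα y - fα x - ⟪fα' x, y - x⟫ ≥ -(3 * α / 2) * ‖y - x‖ ^ 2) ∧
      ∀ x y, ‖fα' x - fα' y‖ ≤ 5 * L₁ * ‖x - y‖ := by
  have hr0 : 0 ≤ α / L₂ := div_nonneg hα hL₂.le
  have hrw : α = L₂ * (α / L₂) := by field_simp
  -- gradient Lipschitz ⇒ Hessian norm bound
  have hlip : LipschitzWith (Real.toNNReal L₁) f' := by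
    apply LipschitzWith.of_dist_le_mul
    intro a b
    rw [dist_eq_norm, dist_eq_norm, Real.coe_toNNReal _ hL₁.le]
    exact hgradlip a b
  have hopL₁ : ∀ z, ‖f'' z‖ ≤ L₁ := by
    intro z
    have := (hhess z).le_of_lipschitz hlip
    rwa [Real.coe_toNNReal _ hL₁.le] at this
  -- pointwise quadratic-form lower bound on the Hessian
  have hquad : ∀ z (w : EuclideanSpace ℝ (Fin d)),
      -(min L₁ (α + L₂ * ‖z - x₀‖)) * ‖w‖^2 ≤ ⟪w, f'' z w⟫ := by
    intro z w
    have h1 : |⟪w, f'' z w⟫| ≤ L₁ * ‖w‖^2 := by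
      calc |⟪w, f'' z w⟫| ≤ ‖w‖ * ‖f'' z w‖ := abs_real_inner_le_norm _ _
        _ ≤ ‖w‖ * (‖f'' z‖ * ‖w‖) :=
            mul_le_mul_of_nonneg_left ((f'' z).le_opNorm w) (norm_nonneg w)
        _ ≤ L₁ * ‖w‖^2 := by nlinarith [hopL₁ z, norm_nonneg w, sq_nonneg ‖w‖]
    have h2 : ⟪w, f'' z w⟫ = ⟪w, f'' x₀ w⟫ + ⟪w, (f'' z - f'' x₀) w⟫ := by
      rw [← inner_add_right]
      congr 1
      simp [ContinuousLinearMap.sub_apply]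
    have h3 : |⟪w, (f'' z - f'' x₀) w⟫| ≤ (L₂ * ‖z - x₀‖) * ‖w‖^2 := by
      calc |⟪w, (f'' z - f'' x₀) w⟫| ≤ ‖w‖ * ‖(f'' z - f'' x₀) w‖ := abs_real_inner_le_norm _ _
        _ ≤ ‖w‖ * (‖f'' z - f'' x₀‖ * ‖w‖) :=
            mul_le_mul_of_nonneg_left ((f'' z - f'' x₀).le_opNorm w) (norm_nonneg w)
        _ ≤ (L₂ * ‖z - x₀‖) * ‖w‖^2 := by
            nlinarith [hhesslip z x₀, norm_nonneg w, sq_nonneg ‖w‖,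
              mul_nonneg hL₂.le (norm_nonneg (z - x₀))]
    have h4 := hpsd w
    rcases le_total L₁ (α + L₂ * ‖z - x₀‖) with hm | hm
    · rw [min_eq_left hm]
      have := (abs_le.mp h1).1
      linarith
    · rw [min_eq_right hm]
      have := (abs_le.mp h3).1
      rw [h2]
      nlinarith
  -- Taylor-type lower bound for f between two points
  have hA : ∀ x y : EuclideanSpace ℝ (Fin d),
      -(min L₁ (α + L₂ * max ‖x - x₀‖ ‖y - x₀‖) * ‖y - x‖^2 / 2)
        ≤ f y - f x - ⟪f' x, y - x⟫ := by
    intro x y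
    set v := y - x with hv
    have hcurve : ∀ t : ℝ, HasDerivAt (fun s : ℝ => x + s • v) v t := by
      intro t
      simpa using ((hasDerivAt_id t).smul_const v).const_add x
    have hφ : ∀ t : ℝ, HasDerivAt (fun s => f (x + s • v)) ⟪f' (x + t • v), v⟫ t := by
      intro t
      have h := ((hgrad (x + t • v)).hasFDerivAt).comp_hasDerivAt t (hcurve t)
      rw [InnerProductSpace.toDual_apply_apply] at h
      exact h
    have hφ₁ : ∀ t : ℝ, HasDerivAt (fun s => ⟪f' (x + s • v), v⟫)
        ⟪f'' (x + t • v) v, v⟫ t := by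
      intro t
      have h := (hhess (x + t • v)).comp_hasDerivAt t (hcurve t)
      have h2 := h.inner ℝ (hasDerivAt_const t v)
      simpa only [Function.comp_def, inner_zero_right, zero_add] using h2
    have hseg : ∀ t ∈ Set.Ioo (0:ℝ) 1,
        -(min L₁ (α + L₂ * max ‖x - x₀‖ ‖y - x₀‖) * ‖v‖^2) ≤ ⟪f'' (x + t • v) v, v⟫ := by
      intro t ht
      rw [real_inner_comm]
      have hz : ‖x + t • v - x₀‖ ≤ max ‖x - x₀‖ ‖y - x₀‖ := by
        have hid : x + t • v - x₀ = (1 - t) • (x - x₀) + t • (y - x₀) := by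
          rw [hv]; module
        rw [hid]
        calc ‖(1 - t) • (x - x₀) + t • (y - x₀)‖
            ≤ ‖(1 - t) • (x - x₀)‖ + ‖t • (y - x₀)‖ := norm_add_le _ _
          _ = (1 - t) * ‖x - x₀‖ + t * ‖y - x₀‖ := by
              rw [norm_smul, norm_smul, Real.norm_eq_abs, Real.norm_eq_abs,
                abs_of_nonneg (by linarith [ht.2] : (0:ℝ) ≤ 1 - t),
                abs_of_nonneg ht.1.le]
          _ ≤ (1 - t) * max ‖x - x₀‖ ‖y - x₀‖ + t * max ‖x - x₀‖ ‖y - x₀‖ := by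
              gcongr
              · linarith [ht.2]
              · exact le_max_left _ _
              · exact ht.1.le
              · exact le_max_right _ _
          _ = max ‖x - x₀‖ ‖y - x₀‖ := by ring
      have hq := hquad (x + t • v) v
      have hmono : min L₁ (α + L₂ * ‖x + t • v - x₀‖)
          ≤ min L₁ (α + L₂ * max ‖x - x₀‖ ‖y - x₀‖) := by
        apply min_le_min le_rfl
        nlinarith [mul_le_mul_of_nonneg_left hz hL₂.le]
      have := mul_le_mul_of_nonneg_right hmono (sq_nonneg ‖v‖)
      linarith
    have h1 := taylor_lb' hφ hφ₁ hseg
    simp only [one_smul, zero_smul, add_zero] at h1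
    have e1 : x + v = y := by rw [hv]; abel
    rw [e1] at h1
    linarith
  constructor
  · -- almost convexity
    intro x y
    rw [ge_iff_le, hfα y, hfα x, hfα' x]
    have hyx : y - x = (y - x₀) - (x - x₀) := by abel
    have hV : ‖y - x‖^2 = ‖x - x₀‖^2 + ‖y - x₀‖^2 - 2 * ⟪x - x₀, y - x₀⟫ := by
      rw [hyx, norm_sub_sq_real, real_inner_comm]; ring
    have ht : |⟪x - x₀, y - x₀⟫| ≤ ‖x - x₀‖ * ‖y - x₀‖ := abs_real_inner_le_norm _ _
    have hiprod : ⟪f' x + (2 * L₁ * max (‖x - x₀‖ - α / L₂) 0 / ‖x - x₀‖) • (x - x₀), y - x⟫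
        = ⟪f' x, y - x⟫ + (2 * L₁ * max (‖x - x₀‖ - α / L₂) 0 / ‖x - x₀‖)
            * (⟪x - x₀, y - x₀⟫ - ‖x - x₀‖^2) := by
      rw [inner_add_left, real_inner_smul_left]
      congr 1
      rw [hyx, inner_sub_right, real_inner_self_eq_norm_sq]
    rw [hiprod]
    set sp := ‖x - x₀‖ with hsp
    set sq' := ‖y - x₀‖ with hsq'
    set t := ⟪x - x₀, y - x₀⟫ with htdef
    set r := α / L₂ with hrdef
    have hspn : 0 ≤ sp := norm_nonneg _
    have hsqn : 0 ≤ sq' := norm_nonneg _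
    have halg1 := alg1' r sp sq' t hr0 hspn hsqn ht
    have hA' := hA x y
    have hdiv : (2 * L₁ * max (sp - r) 0 / sp) * (t - sp^2)
        = 2 * L₁ * ((max (sp - r) 0 / sp) * (t - sp^2)) := by ring
    have hVnn : (0:ℝ) ≤ ‖y - x‖^2 := sq_nonneg _
    set M := max sp sq' with hMdef
    set B' := max (sq' - r) 0 ^ 2 - max (sp - r) 0 ^ 2
        - 2 * (max (sp - r) 0 / sp) * (t - sp^2) with hB'
    rcases le_total M (2*r) with hMr | hMr
    · have h1 : min L₁ (α + L₂ * M) ≤ 3*α := by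
        have h2 : L₂ * M ≤ 2 * α := by nlinarith [mul_le_mul_of_nonneg_left hMr hL₂.le]
        calc min L₁ (α + L₂ * M) ≤ α + L₂ * M := min_le_right _ _
          _ ≤ 3*α := by linarith
      have e1 : 0 ≤ (3*α - min L₁ (α + L₂ * M)) * ‖y - x‖^2 :=
        mul_nonneg (by linarith) hVnn
      have e2 : 0 ≤ L₁ * B' := mul_nonneg hL₁.le halg1
      rw [hB'] at e2
      nlinarith [hA', e1, e2]
    · have halg2 := alg2' r sp sq' t hr0 hspn hsqn ht hMr
      rw [← hMdef, ← hB'] at halg2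
      have hMn : 0 ≤ M := le_trans hspn (le_max_left _ _)
      have hVp : 0 ≤ sp^2 + sq'^2 - 2*t := hV ▸ hVnn
      rcases le_total L₁ (α + L₂ * M) with hm | hm
      · -- min = L₁
        have hLle : L₁ ≤ L₂ * (M + r) := by nlinarith [hrw]
        have key : (L₁ - 3*α) * ‖y - x‖^2 ≤ 2 * L₁ * B' := by
          rcases eq_or_lt_of_le (by positivity : (0:ℝ) ≤ M + r) with hz | hz
          · have hMz : M = 0 := by linarith [hr0, le_max_left sp sq']
            have hspz : sp = 0 := le_antisymm (hMz ▸ le_max_left sp sq') hspn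
            have hsqz : sq' = 0 := le_antisymm (hMz ▸ le_max_right sp sq') hsqn
            have htz : t = 0 := by
              have := abs_le.mp ht
              rw [hspz, hsqz] at this
              simp at this
              linarith [this.1, this.2]
            have hVz : ‖y - x‖^2 = 0 := by rw [hV, hspz, hsqz, htz]; ring
            rw [hVz]
            nlinarith [mul_nonneg hL₁.le halg1]
          · rw [← mul_le_mul_iff_of_pos_right hz, hV]
            have hmul := mul_le_mul_of_nonneg_left halg2 hL₁.le
            have step1 : (L₁ - 3*(L₂*r)) * (M + r) ≤ L₁ * (M - 2*r) := by
              nlinarith [mul_nonneg hr0 (sub_nonneg.2 hLle)]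
            have step2 := mul_le_mul_of_nonneg_right step1 hVp
            have hα2 : α * ((sp^2 + sq'^2 - 2*t) * (M + r))
                = L₂*r*((sp^2 + sq'^2 - 2*t) * (M + r)) := by rw [hrw]
            nlinarith [step2, hmul, hα2]
        rw [min_eq_left hm] at hA'
        rw [hB'] at key
        nlinarith [hA', key]
      · -- min = α + L₂ M
        have hLge : L₂ * (M + r) ≤ L₁ := by nlinarith [hrw]
        have key : (L₂*M - 2*(L₂*r)) * ‖y - x‖^2 ≤ 2 * L₁ * B' := by
          rw [hV]
          have h2 := mul_le_mul_of_nonneg_left halg2 hL₂.le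
          have h3 : 2 * (L₂ * (M + r)) * B' ≤ 2 * L₁ * B' := by
            nlinarith [halg1, hLge]
          nlinarith [h2, h3]
        rw [min_eq_right hm] at hA'
        have hαV : α * ‖y - x‖^2 = L₂*r*‖y - x‖^2 := by rw [hrw]
        rw [hB'] at key
        nlinarith [hA', key, hαV]
  · -- gradient Lipschitz
    intro x y
    rw [hfα' x, hfα' y]
    set r := α / L₂ with hrdef
    set p := x - x₀ with hp
    set q := y - x₀ with hq
    set sp := ‖p‖ with hsp
    set sq' := ‖q‖ with hsq'
    have hspn : 0 ≤ sp := norm_nonneg _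
    have hsqn : 0 ≤ sq' := norm_nonneg _
    set mp := max (sp - r) 0 with hmp
    set mq := max (sq' - r) 0 with hmq
    have hmpn : 0 ≤ mp := le_max_right _ _
    have hmqn : 0 ≤ mq := le_max_right _ _
    have hmp_le : mp ≤ sp := max_le (by linarith) hspn
    have hmq_le : mq ≤ sq' := max_le (by linarith) hsqn
    have hmp_sp : (mp / sp) * sp = mp := by
      rcases eq_or_lt_of_le hspn with h0 | h0
      · have : mp = 0 := le_antisymm (by rw [← h0] at hmp_le; exact hmp_le) hmpn
        rw [this]; simp
      · field_simp
    have hmq_sq : (mq / sq') * sq' = mq := by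
      rcases eq_or_lt_of_le hsqn with h0 | h0
      · have : mq = 0 := le_antisymm (by rw [← h0] at hmq_le; exact hmq_le) hmqn
        rw [this]; simp
      · field_simp
    have hcp : 0 ≤ mp / sp := div_nonneg hmpn hspn
    have hcq : 0 ≤ mq / sq' := div_nonneg hmqn hsqn
    have hcp1 : mp / sp ≤ 1 := by
      rcases eq_or_lt_of_le hspn with h0 | h0
      · rw [← h0]; simp
      · rw [div_le_one h0]; exact hmp_le
    have hcq1 : mq / sq' ≤ 1 := by
      rcases eq_or_lt_of_le hsqn with h0 | h0
      · rw [← h0]; simp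
      · rw [div_le_one h0]; exact hmq_le
    have ht : |⟪p, q⟫| ≤ sp * sq' := abs_real_inner_le_norm _ _
    have hpq : p - q = x - y := by rw [hp, hq]; abel
    clear_value r p q sp sq' mp mq
    -- the nonsmooth part is 4 L₁-Lipschitz
    have hnp : ‖(mp / sp) • p‖ = mp := by
      rw [norm_smul, Real.norm_eq_abs, abs_of_nonneg hcp, ← hsp, hmp_sp]
    have hnq : ‖(mq / sq') • q‖ = mq := by
      rw [norm_smul, Real.norm_eq_abs, abs_of_nonneg hcq, ← hsq', hmq_sq]
    have hw : ‖(mp / sp) • p - (mq / sq') • q‖ ≤ 2 * ‖x - y‖ := by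
      have hnsq : ‖(mp / sp) • p - (mq / sq') • q‖^2
          = mp^2 - 2 * ((mp/sp) * (mq/sq')) * ⟪p, q⟫ + mq^2 := by
        rw [norm_sub_sq_real, hnp, hnq, real_inner_smul_left, real_inner_smul_right]
        ring
      have hyx2 : ‖x - y‖^2 = sp^2 - 2 * ⟪p, q⟫ + sq'^2 := by
        rw [← hpq, norm_sub_sq_real, ← hsp, ← hsq']
      have hcc : (mp/sp) * (mq/sq') * (sp * sq') = mp * mq := by
        calc (mp/sp) * (mq/sq') * (sp * sq') = ((mp/sp) * sp) * ((mq/sq') * sq') := by ring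
          _ = mp * mq := by rw [hmp_sp, hmq_sq]
      have habs : (mp - mq) * (mp - mq) ≤ (sp - sq') * (sp - sq') := by
        have h1 : |mp - mq| ≤ |sp - sq'| := by
          have := abs_max_sub_max_le_abs (sp - r) (sq' - r) 0
          rw [← hmp, ← hmq] at this
          have e : sp - r - (sq' - r) = sp - sq' := by ring
          rwa [e] at this
        have := mul_self_le_mul_self (abs_nonneg (mp - mq)) h1
        rwa [abs_mul_abs_self, abs_mul_abs_self] at this
      have htt := abs_le.mp ht
      have h8 : 0 ≤ (8 - 2*((mp/sp)*(mq/sq'))) * (sp * sq' - ⟪p, q⟫) := by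
        apply mul_nonneg
        · nlinarith [mul_nonneg hcp hcq, hcp1, hcq1, hcp, hcq]
        · linarith [htt.2]
      have hS : ‖(mp / sp) • p - (mq / sq') • q‖^2 ≤ (2 * ‖x - y‖)^2 := by
        rw [hnsq]
        have : (2 * ‖x - y‖)^2 = 4 * ‖x - y‖^2 := by ring
        rw [this, hyx2]
        linarith [hcc, habs, h8, sq_nonneg (sp - sq')]
      have := Real.sqrt_le_sqrt hS
      rwa [Real.sqrt_sq (norm_nonneg _),
        Real.sqrt_sq (by positivity : (0:ℝ) ≤ 2 * ‖x - y‖)] at this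
    have hsplit : (f' x + (2 * L₁ * mp / sp) • p) - (f' y + (2 * L₁ * mq / sq') • q)
        = (f' x - f' y) + (2*L₁) • ((mp / sp) • p - (mq / sq') • q) := by
      have e1 : (2 * L₁ * mp / sp) • p = (2*L₁) • ((mp/sp) • p) := by
        rw [smul_smul]; congr 1; ring
      have e2 : (2 * L₁ * mq / sq') • q = (2*L₁) • ((mq/sq') • q) := by
        rw [smul_smul]; congr 1; ring
      rw [e1, e2, smul_sub]
      abel
    rw [hsplit]
    calc ‖(f' x - f' y) + (2*L₁) • ((mp / sp) • p - (mq / sq') • q)‖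
        ≤ ‖f' x - f' y‖ + ‖(2*L₁) • ((mp / sp) • p - (mq / sq') • q)‖ := norm_add_le _ _
      _ = ‖f' x - f' y‖ + 2 * L₁ * ‖(mp / sp) • p - (mq / sq') • q‖ := by
          rw [norm_smul, Real.norm_eq_abs, abs_of_nonneg (by linarith : (0:ℝ) ≤ 2 * L₁)]
      _ ≤ L₁ * ‖x - y‖ + 2 * L₁ * (2 * ‖x - y‖) :=
          add_le_add (hgradlip x y)
            (mul_le_mul_of_nonneg_left hw (by linarith : (0:ℝ) ≤ 2 * L₁))
      _ = 5 * L₁ * ‖x - y‖ := by ring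
end

section
/- Let f have L₂-Lipschitz Hessian, let z ∈ ℝ^d and let v be a unit vector with ⟨v, ∇²f(z)v⟩ ≤ -α/2 for some α > 0. Set η = (2|⟨v, ∇²f(z)v⟩|/L₂)·sign(⟨v, ∇f(z)⟩) and z' = z - ηv. Then f(z') ≤ f(z) - 2|⟨v, ∇²f(z)v⟩|³/(3L₂²) ≤ f(z) - α³/(12L₂²). -/
open scoped RealInnerProductSpace

lemma taylor_cubic (φ φ₁ φ₂ : ℝ → ℝ) (M : ℝ)
    (h1 : ∀ t, HasDerivAt φ (φ₁ t) t)
    (h2 : ∀ t, HasDerivAt φ₁ (φ₂ t) t)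
    (hlip : ∀ t ∈ Set.Icc (0:ℝ) 1, φ₂ t - φ₂ 0 ≤ M * t) :
    φ 1 ≤ φ 0 + φ₁ 0 + φ₂ 0 / 2 + M / 6 := by
  set h : ℝ → ℝ := fun t => φ t - φ 0 - t * φ₁ 0 - t^2/2 * φ₂ 0 - M * t^3/6 with hh
  set h₁ : ℝ → ℝ := fun t => φ₁ t - φ₁ 0 - t * φ₂ 0 - M * t^2/2 with hh₁
  have dh : ∀ t, HasDerivAt h (h₁ t) t := by
    intro t
    have H := ((((h1 t).sub_const (φ 0)).sub ((hasDerivAt_id t).mul_const (φ₁ 0))).sub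
      ((((hasDerivAt_pow 2 t).div_const 2).mul_const (φ₂ 0)))).sub
      ((((hasDerivAt_pow 3 t).const_mul M)).div_const 6)
    refine H.congr_deriv ?_
    simp only [hh₁]; push_cast; ring
  have dh₁ : ∀ t, HasDerivAt h₁ (φ₂ t - φ₂ 0 - M * t) t := by
    intro t
    have H := (((h2 t).sub_const (φ₁ 0)).sub ((hasDerivAt_id t).mul_const (φ₂ 0))).sub
      (((hasDerivAt_pow 2 t).const_mul M).div_const 2)
    refine H.congr_deriv ?_
    push_cast; ring
  have hconv : Convex ℝ (Set.Icc (0:ℝ) 1) := convex_Icc 0 1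
  have mono1 : AntitoneOn h₁ (Set.Icc (0:ℝ) 1) := by
    apply antitoneOn_of_deriv_nonpos hconv
    · exact fun t _ => (dh₁ t).continuousAt.continuousWithinAt
    · exact fun t _ => (dh₁ t).differentiableAt.differentiableWithinAt
    · intro t ht
      rw [(dh₁ t).deriv]
      rw [interior_Icc] at ht
      have := hlip t ⟨ht.1.le, ht.2.le⟩
      nlinarith [ht.1]
  have h₁nonpos : ∀ t ∈ Set.Icc (0:ℝ) 1, h₁ t ≤ 0 := by
    intro t ht
    have := mono1 (Set.left_mem_Icc.2 zero_le_one) ht ht.1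
    simpa [hh₁] using this
  have mono : AntitoneOn h (Set.Icc (0:ℝ) 1) := by
    apply antitoneOn_of_deriv_nonpos hconv
    · exact fun t _ => (dh t).continuousAt.continuousWithinAt
    · exact fun t _ => (dh t).differentiableAt.differentiableWithinAt
    · intro t ht
      rw [(dh t).deriv]
      rw [interior_Icc] at ht
      exact h₁nonpos t ⟨ht.1.le, ht.2.le⟩
  have := mono (Set.left_mem_Icc.2 zero_le_one) (Set.right_mem_Icc.2 zero_le_one) zero_le_one
  simp only [hh] at this
  nlinarith [this]

set_option maxHeartbeats 1000000 in
set_option synthInstance.maxHeartbeats 400000 in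
/-- Progress made by a negative-curvature step: if `⟪v, ∇²f(z) v⟫ ≤ -α/2` for a unit
vector `v` and `z' = z - η v` with `η = (2|⟪v, ∇²f(z)v⟫|/L₂) sign(⟪v, ∇f(z)⟫)`, then
`f z' ≤ f z - 2|⟪v, ∇²f(z)v⟫|³/(3L₂²) ≤ f z - α³/(12 L₂²)`. -/
theorem stmt_7 {d : ℕ} (f : EuclideanSpace ℝ (Fin d) → ℝ)
    (f' : EuclideanSpace ℝ (Fin d) → EuclideanSpace ℝ (Fin d))
    (f'' : EuclideanSpace ℝ (Fin d) → EuclideanSpace ℝ (Fin d) →L[ℝ] EuclideanSpace ℝ (Fin d))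
    (L₂ α : ℝ) (hL₂ : 0 < L₂) (hα : 0 < α)
    (hgrad : ∀ x, HasGradientAt f (f' x) x)
    (hhess : ∀ x, HasFDerivAt f' (f'' x) x)
    (hhesscont : Continuous f'')
    (hhesslip : ∀ x y, ‖f'' x - f'' y‖ ≤ L₂ * ‖x - y‖)
    (z v : EuclideanSpace ℝ (Fin d)) (hv : ‖v‖ = 1)
    (hcurv : ⟪v, f'' z v⟫ ≤ -α / 2)
    (η : ℝ)
    (hη : η = 2 * |⟪v, f'' z v⟫| / L₂ * (if 0 ≤ ⟪v, f' z⟫ then (1 : ℝ) else -1))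
    (z' : EuclideanSpace ℝ (Fin d)) (hz' : z' = z - η • v) :
    f z' ≤ f z - 2 * |⟪v, f'' z v⟫| ^ 3 / (3 * L₂ ^ 2) ∧
      f z - 2 * |⟪v, f'' z v⟫| ^ 3 / (3 * L₂ ^ 2) ≤ f z - α ^ 3 / (12 * L₂ ^ 2) := by
  set w : EuclideanSpace ℝ (Fin d) := -η • v with hw
  set c : ℝ := ⟪v, f'' z v⟫ with hc
  set b : ℝ := ⟪v, f' z⟫ with hb
  set s : ℝ := (if 0 ≤ b then (1:ℝ) else -1) with hss
  have hL0 : L₂ ≠ 0 := ne_of_gt hL₂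
  have hcurve : ∀ t : ℝ, HasDerivAt (fun t : ℝ => z + t • w) w t := by
    intro t
    simpa using ((hasDerivAt_id t).smul_const w).const_add z
  set φ : ℝ → ℝ := fun t => f (z + t • w) with hφ
  set φ₁ : ℝ → ℝ := fun t => ⟪w, f' (z + t • w)⟫ with hφ₁
  set φ₂ : ℝ → ℝ := fun t => ⟪w, f'' (z + t • w) w⟫ with hφ₂
  have h1 : ∀ t, HasDerivAt φ (φ₁ t) t := by
    intro t
    have H := ((hgrad (z + t • w)).hasFDerivAt.comp_hasDerivAt t (hcurve t))
    rw [InnerProductSpace.toDual_apply_apply, real_inner_comm] at H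
    exact H
  have h2 : ∀ t, HasDerivAt φ₁ (φ₂ t) t := by
    intro t
    have hu : HasDerivAt (fun t : ℝ => f' (z + t • w)) (f'' (z + t • w) w) t :=
      (hhess (z + t • w)).comp_hasDerivAt t (hcurve t)
    exact ((innerSL ℝ w).hasFDerivAt.comp_hasDerivAt t hu)
  have hwnorm : ‖w‖ = |η| := by
    rw [hw, norm_smul, hv]; simp
  have hlip : ∀ t ∈ Set.Icc (0:ℝ) 1, φ₂ t - φ₂ 0 ≤ (L₂ * |η|^3) * t := by
    intro t ht
    have key : φ₂ t - φ₂ 0 = ⟪w, (f'' (z + t • w) - f'' z) w⟫ := by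
      simp only [hφ₂, zero_smul, add_zero, ContinuousLinearMap.sub_apply, inner_sub_right]
    rw [key]
    have h1' : ⟪w, (f'' (z + t • w) - f'' z) w⟫ ≤ ‖w‖ * ‖(f'' (z + t • w) - f'' z) w‖ :=
      real_inner_le_norm _ _
    have h2' : ‖(f'' (z + t • w) - f'' z) w‖ ≤ ‖f'' (z + t • w) - f'' z‖ * ‖w‖ :=
      (f'' (z + t • w) - f'' z).le_opNorm w
    have h3' : ‖f'' (z + t • w) - f'' z‖ ≤ L₂ * (t * ‖w‖) := by
      have := hhesslip (z + t • w) z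
      simpa [norm_smul, abs_of_nonneg ht.1] using this
    have hwn : (0:ℝ) ≤ ‖w‖ := norm_nonneg _
    have hA : ‖(f'' (z + t • w) - f'' z) w‖ ≤ L₂ * (t * ‖w‖) * ‖w‖ :=
      h2'.trans (mul_le_mul_of_nonneg_right h3' hwn)
    have hB : ⟪w, (f'' (z + t • w) - f'' z) w⟫ ≤ ‖w‖ * (L₂ * (t * ‖w‖) * ‖w‖) :=
      h1'.trans (mul_le_mul_of_nonneg_left hA hwn)
    calc ⟪w, (f'' (z + t • w) - f'' z) w⟫ ≤ ‖w‖ * (L₂ * (t * ‖w‖) * ‖w‖) := hB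
      _ = (L₂ * |η|^3) * t := by rw [hwnorm]; ring
  have main := taylor_cubic φ φ₁ φ₂ (L₂ * |η|^3) h1 h2 hlip
  have hφ1 : φ 1 = f z' := by
    show f (z + (1:ℝ) • w) = f z'
    rw [hz']; congr 1; rw [hw]; module
  have hφ0 : φ 0 = f z := by
    show f (z + (0:ℝ) • w) = f z
    rw [zero_smul, add_zero]
  have hφ₁0 : φ₁ 0 = -η * b := by
    show ⟪w, f' (z + (0:ℝ) • w)⟫ = -η * b
    rw [zero_smul, add_zero, hw, real_inner_smul_left, hb]
  have hφ₂0 : φ₂ 0 = η^2 * c := by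
    show ⟪w, f'' (z + (0:ℝ) • w) w⟫ = η^2 * c
    rw [zero_smul, add_zero, hw, map_smul, real_inner_smul_left, real_inner_smul_right, hc]
    ring
  -- sign facts
  have hcneg : c < 0 := lt_of_le_of_lt hcurv (by linarith)
  have hca : c = -|c| := by rw [abs_of_neg hcneg]; ring
  have hsb : s * b = |b| := by
    rw [hss]; rcases le_or_gt 0 b with h | h
    · simp [h, abs_of_nonneg h]
    · simp [not_le.2 h, abs_of_neg h]
  have hηabs : |η| = 2 * |c| / L₂ := by
    have habs1 : |s| = 1 := by rw [hss]; split <;> norm_num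
    rw [hη, abs_mul, habs1, mul_one, abs_div, abs_mul, abs_abs, abs_of_pos hL₂]
    norm_num
  have hη2 : η^2 = (2 * |c| / L₂)^2 := by rw [← sq_abs, hηabs]
  have habsc : α/2 ≤ |c| := by rw [abs_of_neg hcneg]; linarith
  have habsb : (0:ℝ) ≤ |b| := abs_nonneg b
  have hcnn : (0:ℝ) ≤ |c| := abs_nonneg c
  -- arithmetic
  have e1 : φ₁ 0 = -(2 * |c| / L₂) * |b| := by rw [hφ₁0, hη, ← hsb]; ring
  have e2 : φ₂ 0 / 2 = -(2 * |c|^3 / L₂^2) := by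
    rw [hφ₂0, hη2]
    rw [hca]
    field_simp
    simp only [abs_neg, abs_abs]
    ring
  have e3 : L₂ * |η|^3 / 6 = 4 * |c|^3 / (3 * L₂^2) := by
    rw [hηabs]; field_simp; ring
  have e4 : -(2 * |c| / L₂) * |b| ≤ 0 := by
    have hnn : (0:ℝ) ≤ 2 * |c| / L₂ * |b| := by positivity
    linarith
  have e5 : -(2 * |c|^3 / L₂^2) + 4 * |c|^3 / (3 * L₂^2) = -(2 * |c|^3 / (3 * L₂^2)) := by
    field_simp; ring
  have hstep : f z' ≤ f z - 2 * |c| ^ 3 / (3 * L₂ ^ 2) := by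
    rw [← hφ1, ← hφ0]
    rw [e1, e2, e3] at main
    linarith
  refine ⟨hstep, ?_⟩
  have hpow : (α/2)^3 ≤ |c|^3 := pow_le_pow_left₀ (by positivity) habsc 3
  have : α^3 / (12 * L₂^2) ≤ 2 * |c|^3 / (3 * L₂^2) := by
    rw [div_le_div_iff₀ (by positivity) (by positivity)]
    nlinarith [sq_nonneg L₂]
  linarith
end

section
/- Let f have L₂-Lipschitz Hessian and suppose ‖∇f(x₊)‖ ≤ σ²/(16L₂) and ∇²f(x₊) ⪰ σ·I for some σ > 0. Then the function f₊(x) = f(x) + L₁·(max(‖x - x₊‖ - σ/(4L₂), 0))² is (σ/2)-strongly convex. -/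
open scoped RealInnerProductSpace

open Set Filter


set_option maxHeartbeats 1000000
set_option synthInstance.maxHeartbeats 100000


lemma maxsq_hasDerivAt (s₀ : ℝ) : HasDerivAt (fun s : ℝ => max s 0 ^ 2) (2 * max s₀ 0) s₀ := by
  rcases lt_trichotomy s₀ 0 with h | h | h
  · have hev : (fun s : ℝ => max s 0 ^ 2) =ᶠ[nhds s₀] fun _ => (0 : ℝ) := by
      filter_upwards [Iio_mem_nhds h] with s hs
      rw [max_eq_right (le_of_lt hs)]
      norm_num
    rw [max_eq_right h.le, mul_zero]
    exact (hasDerivAt_const s₀ (0 : ℝ)).congr_of_eventuallyEq hev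
  · subst h
    rw [max_self, mul_zero]
    rw [hasDerivAt_iff_isLittleO]
    rw [Asymptotics.isLittleO_iff]
    intro c hc
    filter_upwards [Metric.ball_mem_nhds (0 : ℝ) hc] with s hs
    rw [Metric.mem_ball, Real.dist_eq, sub_zero] at hs
    have h1 : (0:ℝ) ≤ max s 0 := le_max_right _ _
    have h2 : max s 0 ≤ |s| := max_le (le_abs_self s) (abs_nonneg s)
    simp only [max_self, sub_zero, smul_zero, sub_zero]
    rw [Real.norm_eq_abs, Real.norm_eq_abs]
    norm_num
    calc max s 0 ^ 2 ≤ |s| * |s| := by nlinarith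
      _ ≤ c * |s| := by nlinarith [abs_nonneg s]
  · have hev : (fun s : ℝ => max s 0 ^ 2) =ᶠ[nhds s₀] fun s => s ^ 2 := by
      filter_upwards [Ioi_mem_nhds h] with s hs
      rw [max_eq_left (le_of_lt (mem_Ioi.1 hs))]
    rw [max_eq_left h.le]
    have := hasDerivAt_pow 2 s₀
    norm_num at this
    exact (by simpa [mul_comm] using this : HasDerivAt (fun s : ℝ => s ^ 2) (2 * s₀) s₀).congr_of_eventuallyEq hev

lemma glue_mono {φ : ℝ → ℝ} {k₁ k₂ : ℝ} (hk : k₁ ≤ k₂)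
    (h₁ : MonotoneOn φ (Iic k₁)) (h₂ : MonotoneOn φ (Icc k₁ k₂))
    (h₃ : MonotoneOn φ (Ici k₂)) : Monotone φ := by
  intro a b hab
  rcases le_total b k₁ with h | h
  · exact h₁ (hab.trans h) h hab
  rcases le_total k₂ a with h' | h'
  · exact h₃ h' (h'.trans hab) hab
  rcases le_total a k₁ with ha | ha
  · have t1 : φ a ≤ φ k₁ := h₁ ha (mem_Iic.2 le_rfl) ha
    rcases le_total b k₂ with hb | hb
    · exact t1.trans (h₂ ⟨le_rfl, hk⟩ ⟨h, hb⟩ h)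
    · exact t1.trans ((h₂ ⟨le_rfl, hk⟩ ⟨hk, le_rfl⟩ hk).trans (h₃ (mem_Ici.2 le_rfl) hb hb))
  · rcases le_total b k₂ with hb | hb
    · exact h₂ ⟨ha, h'⟩ ⟨h, hb⟩ hab
    · exact (h₂ ⟨ha, h'⟩ ⟨hk, le_rfl⟩ h').trans (h₃ (mem_Ici.2 le_rfl) hb hb)



/-- If `‖∇f x₊‖ ≤ σ²/(16 L₂)` and `∇²f x₊ ⪰ σ I`, then
`f₊ x = f x + L₁ (max (‖x - x₊‖ - σ/(4L₂)) 0)²` is `(σ/2)`-strongly convex. -/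
theorem stmt_13 {d : ℕ} (f : EuclideanSpace ℝ (Fin d) → ℝ)
    (f' : EuclideanSpace ℝ (Fin d) → EuclideanSpace ℝ (Fin d))
    (f'' : EuclideanSpace ℝ (Fin d) → EuclideanSpace ℝ (Fin d) →L[ℝ] EuclideanSpace ℝ (Fin d))
    (L₁ L₂ σ : ℝ) (hL₂ : 0 < L₂) (hσ : 0 < σ) (hσL₁ : σ ≤ L₁)
    (hgrad : ∀ x, HasGradientAt f (f' x) x)
    (hgradlip : ∀ x y, ‖f' x - f' y‖ ≤ L₁ * ‖x - y‖)
    (hhess : ∀ x, HasFDerivAt f' (f'' x) x)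
    (hhesscont : Continuous f'')
    (hhesslip : ∀ x y, ‖f'' x - f'' y‖ ≤ L₂ * ‖x - y‖)
    (xp : EuclideanSpace ℝ (Fin d))
    (hgradsmall : ‖f' xp‖ ≤ σ ^ 2 / (16 * L₂))
    (hpsd : ∀ v, ⟪v, f'' xp v⟫ ≥ σ * ‖v‖ ^ 2)
    (fp : EuclideanSpace ℝ (Fin d) → ℝ)
    (hfp : ∀ x, fp x = f x + L₁ * max (‖x - xp‖ - σ / (4 * L₂)) 0 ^ 2)
    (fp' : EuclideanSpace ℝ (Fin d) → EuclideanSpace ℝ (Fin d))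
    (hfp' : ∀ x, fp' x =
      f' x + (2 * L₁ * max (‖x - xp‖ - σ / (4 * L₂)) 0 / ‖x - xp‖) • (x - xp)) :
    ∀ x y, fp y ≥ fp x + ⟪fp' x, y - x⟫ + σ / 2 / 2 * ‖y - x‖ ^ 2 := by
  have hL₁ : 0 < L₁ := lt_of_lt_of_le hσ hσL₁
  intro x y
  rcases eq_or_ne y x with rfl | hyx
  · simp
  set r : ℝ := σ / (4 * L₂) with hrdef
  have hr : 0 < r := by positivity
  set u : EuclideanSpace ℝ (Fin d) := y - x with hudef
  have hu : u ≠ 0 := sub_ne_zero.2 hyx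
  have hun : (0:ℝ) < ‖u‖ := norm_pos_iff.2 hu
  -- derivative of the line and basic curves
  have hline : ∀ t : ℝ, HasDerivAt (fun s : ℝ => x + s • u) u t := by
    intro t
    simpa using ((hasDerivAt_id t).smul_const u).const_add x
  have hz' : ∀ t : ℝ, HasDerivAt (fun s : ℝ => x + s • u - xp) u t :=
    fun t => (hline t).sub_const xp
  have hw' : ∀ t : ℝ, HasDerivAt (fun s : ℝ => ⟪x + s • u - xp, u⟫) (‖u‖ ^ 2) t := by
    intro t
    have h := HasDerivAt.inner ℝ (hz' t) (hasDerivAt_const t u)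
    convert h using 1
    · rfl
    · rfl
    rw [inner_zero_right, real_inner_self_eq_norm_sq, zero_add]
  have hq' : ∀ t : ℝ, HasDerivAt (fun s : ℝ => ‖x + s • u - xp‖ ^ 2)
      (2 * ⟪x + t • u - xp, u⟫) t := by
    intro t
    have h := HasDerivAt.inner ℝ (hz' t) (hz' t)
    have heq : (fun s : ℝ => ⟪x + s • u - xp, x + s • u - xp⟫) =
        fun s : ℝ => ‖x + s • u - xp‖ ^ 2 := by
      funext s; rw [real_inner_self_eq_norm_sq]
    rw [heq] at h
    convert h using 1
    · rfl
    · rfl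
    rw [real_inner_comm]
    ring
  have hd' : ∀ t : ℝ, ‖x + t • u - xp‖ ≠ 0 →
      HasDerivAt (fun s : ℝ => ‖x + s • u - xp‖)
        (⟪x + t • u - xp, u⟫ / ‖x + t • u - xp‖) t := by
    intro t ht
    have hq0 : ‖x + t • u - xp‖ ^ 2 ≠ 0 := pow_ne_zero 2 ht
    have hs := (hq' t).sqrt hq0
    have heq : (fun s : ℝ => Real.sqrt (‖x + s • u - xp‖ ^ 2)) =
        fun s : ℝ => ‖x + s • u - xp‖ := by
      funext s; rw [Real.sqrt_sq (norm_nonneg _)]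
    rw [heq] at hs
    convert hs using 1
    rw [Real.sqrt_sq (norm_nonneg _)]
    ring
  -- derivative of the penalty term along the line
  have hcontdd : Continuous fun s : ℝ => ‖x + s • u - xp‖ := by
    have : Continuous fun s : ℝ => x + s • u - xp :=
      (continuous_const.add (continuous_id.smul continuous_const)).sub continuous_const
    exact this.norm
  have hms : ∀ t : ℝ, HasDerivAt (fun s : ℝ => max (‖x + s • u - xp‖ - r) 0 ^ 2)
      (2 * max (‖x + t • u - xp‖ - r) 0 / ‖x + t • u - xp‖ * ⟪x + t • u - xp, u⟫) t := by
    intro t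
    rcases eq_or_ne (‖x + t • u - xp‖) 0 with h0 | h0
    · have hev : ∀ᶠ s in nhds t, ‖x + s • u - xp‖ < r := by
        have htd : Tendsto (fun s : ℝ => ‖x + s • u - xp‖) (nhds t) (nhds (‖x + t • u - xp‖)) :=
          hcontdd.continuousAt
        rw [h0] at htd
        exact htd (Iio_mem_nhds hr)
      have heq : (fun s : ℝ => max (‖x + s • u - xp‖ - r) 0 ^ 2) =ᶠ[nhds t] fun _ => (0:ℝ) := by
        filter_upwards [hev] with s hs
        rw [max_eq_right (by linarith)]
        norm_num
      have hval : 2 * max (‖x + t • u - xp‖ - r) 0 / ‖x + t • u - xp‖ * ⟪x + t • u - xp, u⟫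
          = 0 := by
        rw [h0, max_eq_right (by linarith)]
        simp
      rw [hval]
      exact (hasDerivAt_const t (0:ℝ)).congr_of_eventuallyEq heq
    · have h1 := (hd' t h0).sub_const r
      have h2 := maxsq_hasDerivAt (‖x + t • u - xp‖ - r)
      have h3 := h2.comp t h1
      have : (fun s : ℝ => max s 0 ^ 2) ∘ (fun s : ℝ => ‖x + s • u - xp‖ - r)
          = fun s : ℝ => max (‖x + s • u - xp‖ - r) 0 ^ 2 := rfl
      rw [this] at h3
      convert h3 using 1
      · rfl
      · rfl
      ring
  -- derivative of f along the line
  have hfz : ∀ t : ℝ, HasDerivAt (fun s : ℝ => f (x + s • u)) ⟪f' (x + t • u), u⟫ t := by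
    intro t
    have hg := (hgrad (x + t • u)).hasFDerivAt
    have h := hg.comp_hasDerivAt t (hline t)
    simp [InnerProductSpace.toDual_apply_apply] at h
    exact h
  -- derivative of fp along the line
  have hfpz : ∀ t : ℝ, HasDerivAt (fun s : ℝ => fp (x + s • u)) (⟪fp' (x + t • u), u⟫) t := by
    intro t
    have h1 := (hfz t).add ((hms t).const_mul L₁)
    have hfun : (fun s : ℝ => fp (x + s • u)) =
        fun s : ℝ => f (x + s • u) + L₁ * max (‖x + s • u - xp‖ - r) 0 ^ 2 :=
      funext fun s => hfp _
    rw [hfun]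
    have hval : ⟪fp' (x + t • u), u⟫ = ⟪f' (x + t • u), u⟫ +
        L₁ * (2 * max (‖x + t • u - xp‖ - r) 0 / ‖x + t • u - xp‖ * ⟪x + t • u - xp, u⟫) := by
      rw [hfp', inner_add_left, real_inner_smul_left]
      ring
    rw [hval]
    exact h1
  -- derivative of the gradient term along the line
  have hf2 : ∀ t : ℝ, HasDerivAt (fun s : ℝ => ⟪f' (x + s • u), u⟫)
      ⟪(f'' (x + t • u)) u, u⟫ t := by
    intro t
    have h1 := (hhess (x + t • u)).comp_hasDerivAt t (hline t)
    have h := HasDerivAt.inner ℝ h1 (hasDerivAt_const t u)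
    convert h using 1
    · rfl
    · rfl
    · rfl
    rw [inner_zero_right, zero_add]
  -- operator norm bound on the Hessian
  have hlip : LipschitzWith (Real.toNNReal L₁) f' := by
    rw [lipschitzWith_iff_dist_le_mul]
    intro a b
    rw [dist_eq_norm, dist_eq_norm, Real.coe_toNNReal _ hL₁.le]
    exact hgradlip a b
  have hf2norm : ∀ v, ‖f'' v‖ ≤ L₁ := by
    intro v
    have := (hhess v).le_of_lipschitz hlip
    rwa [Real.coe_toNNReal _ hL₁.le] at this
  -- Hessian lower bounds along the line
  have hlb1 : ∀ t : ℝ, (σ - L₂ * ‖x + t • u - xp‖) * ‖u‖ ^ 2 ≤ ⟪(f'' (x + t • u)) u, u⟫ := by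
    intro t
    have hcs := abs_real_inner_le_norm ((f'' (x + t • u)) u - (f'' xp) u) u
    have hop := ContinuousLinearMap.le_opNorm (f'' (x + t • u) - f'' xp) u
    rw [ContinuousLinearMap.sub_apply] at hop
    have hnl : ‖f'' (x + t • u) - f'' xp‖ ≤ L₂ * ‖x + t • u - xp‖ := by
      exact hhesslip (x + t • u) xp
    have h2 := hpsd u
    have h3 : ⟪(f'' (x + t • u)) u, u⟫
        = ⟪(f'' (x + t • u)) u - (f'' xp) u, u⟫ + ⟪u, (f'' xp) u⟫ := by
      rw [inner_sub_left, real_inner_comm u ((f'' xp) u)]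
      ring
    have h4 : -(L₂ * ‖x + t • u - xp‖ * ‖u‖ ^ 2) ≤ ⟪(f'' (x + t • u)) u - (f'' xp) u, u⟫ := by
      have hnn : (0:ℝ) ≤ ‖u‖ := norm_nonneg u
      nlinarith [abs_nonneg (⟪(f'' (x + t • u)) u - (f'' xp) u, u⟫ : ℝ),
        neg_abs_le (⟪(f'' (x + t • u)) u - (f'' xp) u, u⟫ : ℝ),
        norm_nonneg ((f'' (x + t • u)) u - (f'' xp) u)]
    nlinarith [h2]
  have hlb2 : ∀ t : ℝ, -(L₁ * ‖u‖ ^ 2) ≤ ⟪(f'' (x + t • u)) u, u⟫ := by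
    intro t
    have hcs := abs_real_inner_le_norm ((f'' (x + t • u)) u) u
    have hop := ContinuousLinearMap.le_opNorm (f'' (x + t • u)) u
    have hnn : (0:ℝ) ≤ ‖u‖ := norm_nonneg u
    nlinarith [hf2norm (x + t • u), neg_abs_le (⟪(f'' (x + t • u)) u, u⟫ : ℝ),
      norm_nonneg ((f'' (x + t • u)) u)]
  have hdL2 : L₂ ≠ 0 := ne_of_gt hL₂
  have hrL₂ : L₂ * r = σ / 4 := by rw [hrdef]; field_simp
  -- the key scalar function χ
  set χ : ℝ → ℝ := fun t => ⟪fp' (x + t • u), u⟫ - σ / 2 * ⟪x + t • u - xp, u⟫ with hχdef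
  have hχeq : ∀ t : ℝ, χ t = (⟪f' (x + t • u), u⟫ +
      2 * L₁ * max (‖x + t • u - xp‖ - r) 0 / ‖x + t • u - xp‖ * ⟪x + t • u - xp, u⟫)
      - σ / 2 * ⟪x + t • u - xp, u⟫ := by
    intro t
    rw [hχdef]
    simp only []
    rw [hfp', inner_add_left, real_inner_smul_left]
  -- continuity of χ
  have hf'cont : Continuous f' := continuous_iff_continuousAt.2 fun v => (hhess v).continuousAt
  have hlinec : Continuous fun s : ℝ => x + s • u :=
    continuous_const.add (continuous_id.smul continuous_const)
  have hcontw : Continuous fun s : ℝ => (⟪x + s • u - xp, u⟫ : ℝ) :=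
    (hlinec.sub continuous_const).inner continuous_const
  have hcontfin : Continuous fun s : ℝ => (⟪f' (x + s • u), u⟫ : ℝ) :=
    (hf'cont.comp hlinec).inner continuous_const
  have hχgcont : Continuous fun s : ℝ =>
      2 * L₁ * max (‖x + s • u - xp‖ - r) 0 / ‖x + s • u - xp‖ * ⟪x + s • u - xp, u⟫ := by
    rw [continuous_iff_continuousAt]
    intro t
    rcases lt_or_ge (‖x + t • u - xp‖) r with h | h
    · have hev : ∀ᶠ s in nhds t, ‖x + s • u - xp‖ < r := by
        have htd : Tendsto (fun s : ℝ => ‖x + s • u - xp‖) (nhds t)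
            (nhds (‖x + t • u - xp‖)) := hcontdd.continuousAt
        exact htd (Iio_mem_nhds h)
      have heq : (fun s : ℝ =>
          2 * L₁ * max (‖x + s • u - xp‖ - r) 0 / ‖x + s • u - xp‖ * ⟪x + s • u - xp, u⟫)
          =ᶠ[nhds t] fun _ => (0:ℝ) := by
        filter_upwards [hev] with s hs
        rw [max_eq_right (by linarith)]
        simp
      exact continuousAt_const.congr heq.symm
    · have hdd0 : ‖x + t • u - xp‖ ≠ 0 := ne_of_gt (lt_of_lt_of_le hr h)
      have hnum : ContinuousAt (fun s : ℝ => 2 * L₁ * max (‖x + s • u - xp‖ - r) 0) t :=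
        (continuousAt_const.mul ((hcontdd.continuousAt.sub continuousAt_const).max
          continuousAt_const))
      exact ((hnum.div hcontdd.continuousAt hdd0).mul hcontw.continuousAt)
  have hχcont : Continuous χ := by
    have : χ = fun t : ℝ => (⟪f' (x + t • u), u⟫ +
        2 * L₁ * max (‖x + t • u - xp‖ - r) 0 / ‖x + t • u - xp‖ * ⟪x + t • u - xp, u⟫)
        - σ / 2 * ⟪x + t • u - xp, u⟫ := funext hχeq
    rw [this]
    exact (hcontfin.add hχgcont).sub (continuous_const.mul hcontw)
  -- derivative of χ outside the ball
  have hout : ∀ t : ℝ, r < ‖x + t • u - xp‖ → ∃ D : ℝ, HasDerivAt χ D t ∧ 0 ≤ D := by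
    intro t ht
    have hA0 : (0:ℝ) < ‖x + t • u - xp‖ := hr.trans ht
    have hA0' : ‖x + t • u - xp‖ ≠ 0 := ne_of_gt hA0
    refine ⟨⟪(f'' (x + t • u)) u, u⟫
      + 2 * L₁ * (r * ⟪x + t • u - xp, u⟫ ^ 2 / ‖x + t • u - xp‖ ^ 3)
      + 2 * L₁ * ((1 - r / ‖x + t • u - xp‖) * ‖u‖ ^ 2)
      - σ / 2 * ‖u‖ ^ 2, ?_, ?_⟩
    · -- the derivative
      have hquot := (hasDerivAt_const t r).div (hd' t hA0') hA0'
      have h1m := (hasDerivAt_const t (1:ℝ)).sub hquot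
      have hprod := h1m.mul (hw' t)
      have hG := hprod.const_mul (2 * L₁)
      have htot := ((hf2 t).add hG).sub ((hw' t).const_mul (σ / 2))
      have hev : ∀ᶠ s in nhds t, r < ‖x + s • u - xp‖ := by
        have htd : Tendsto (fun s : ℝ => ‖x + s • u - xp‖) (nhds t)
            (nhds (‖x + t • u - xp‖)) := hcontdd.continuousAt
        exact htd (Ioi_mem_nhds ht)
      have heq : χ =ᶠ[nhds t] fun s : ℝ => ⟪f' (x + s • u), u⟫ +
          2 * L₁ * ((1 - r / ‖x + s • u - xp‖) * ⟪x + s • u - xp, u⟫)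
          - σ / 2 * ⟪x + s • u - xp, u⟫ := by
        filter_upwards [hev] with s hs
        have hs0 : ‖x + s • u - xp‖ ≠ 0 := ne_of_gt (hr.trans hs)
        rw [hχeq s, max_eq_left (by linarith)]
        field_simp
      have hfin := htot.congr_of_eventuallyEq heq
      convert hfin using 1
      · rfl
      · rfl
      simp only [Pi.sub_apply, Pi.div_apply]
      field_simp
      ring
    · -- nonnegativity
      have ht1 : (0:ℝ) ≤ 2 * L₁ * (r * ⟪x + t • u - xp, u⟫ ^ 2 / ‖x + t • u - xp‖ ^ 3) := by
        positivity
      rcases le_or_gt (‖x + t • u - xp‖) (2 * r) with h2 | h2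
      · have hLA : L₂ * ‖x + t • u - xp‖ ≤ σ / 2 := by nlinarith
        have hge : (0:ℝ) ≤ 1 - r / ‖x + t • u - xp‖ := by
          rw [sub_nonneg, div_le_one hA0]; linarith
        have key : σ / 2 * ‖u‖ ^ 2 ≤ (σ - L₂ * ‖x + t • u - xp‖) * ‖u‖ ^ 2 :=
          mul_le_mul_of_nonneg_right (by linarith) (sq_nonneg _)
        have ht2 : (0:ℝ) ≤ 2 * L₁ * ((1 - r / ‖x + t • u - xp‖) * ‖u‖ ^ 2) :=
          mul_nonneg (by linarith) (mul_nonneg hge (sq_nonneg _))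
        linarith [hlb1 t]
      rcases le_or_gt (‖x + t • u - xp‖) (4 * r) with h4 | h4
      · have hLA : L₂ * ‖x + t • u - xp‖ ≤ σ := by nlinarith
        have hH : (0:ℝ) ≤ ⟪(f'' (x + t • u)) u, u⟫ :=
          le_trans (mul_nonneg (by linarith) (sq_nonneg _)) (hlb1 t)
        have hge : (1:ℝ) / 2 ≤ 1 - r / ‖x + t • u - xp‖ := by
          rw [le_sub_iff_add_le, ← le_sub_iff_add_le', div_le_iff₀ hA0]; linarith
        have key : σ / 2 * ‖u‖ ^ 2 ≤ 2 * L₁ * ((1 - r / ‖x + t • u - xp‖) * ‖u‖ ^ 2) := by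
          have h5 : 1 / 2 * ‖u‖ ^ 2 ≤ (1 - r / ‖x + t • u - xp‖) * ‖u‖ ^ 2 :=
            mul_le_mul_of_nonneg_right hge (sq_nonneg _)
          nlinarith [sq_nonneg ‖u‖]
        linarith
      · have hge : (3:ℝ) / 4 ≤ 1 - r / ‖x + t • u - xp‖ := by
          rw [le_sub_iff_add_le, ← le_sub_iff_add_le', div_le_iff₀ hA0]; linarith
        have key : (L₁ + σ / 2) * ‖u‖ ^ 2 ≤ 2 * L₁ * ((1 - r / ‖x + t • u - xp‖) * ‖u‖ ^ 2) := by
          have h5 : 3 / 4 * ‖u‖ ^ 2 ≤ (1 - r / ‖x + t • u - xp‖) * ‖u‖ ^ 2 :=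
            mul_le_mul_of_nonneg_right hge (sq_nonneg _)
          nlinarith [sq_nonneg ‖u‖]
        linarith [hlb2 t]
  -- derivative of χ inside the ball
  have hin : ∀ t : ℝ, HasDerivAt (fun s : ℝ => ⟪f' (x + s • u), u⟫ - σ / 2 * ⟪x + s • u - xp, u⟫)
      (⟪(f'' (x + t • u)) u, u⟫ - σ / 2 * ‖u‖ ^ 2) t :=
    fun t => (hf2 t).sub ((hw' t).const_mul (σ / 2))
  have hinpos : ∀ t : ℝ, ‖x + t • u - xp‖ ≤ r →
      0 ≤ ⟪(f'' (x + t • u)) u, u⟫ - σ / 2 * ‖u‖ ^ 2 := by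
    intro t ht
    have hLA : L₂ * ‖x + t • u - xp‖ ≤ σ / 4 := by nlinarith [norm_nonneg (x + t • u - xp)]
    have key : σ / 2 * ‖u‖ ^ 2 ≤ (σ - L₂ * ‖x + t • u - xp‖) * ‖u‖ ^ 2 :=
      mul_le_mul_of_nonneg_right (by linarith) (sq_nonneg _)
    linarith [hlb1 t]
  -- monotonicity of χ
  have hmono : Monotone χ := by
    by_cases hS : {t : ℝ | ‖x + t • u - xp‖ ≤ r}.Nonempty
    · have hSclosed : IsClosed {t : ℝ | ‖x + t • u - xp‖ ≤ r} :=
        isClosed_le hcontdd continuous_const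
      have hBnd : ∀ t ∈ {t : ℝ | ‖x + t • u - xp‖ ≤ r}, |t| ≤ (r + ‖x - xp‖) / ‖u‖ := by
        intro t ht
        have hts : ‖x + t • u - xp‖ ≤ r := ht
        have h1 := norm_sub_le (x + t • u - xp) (x - xp)
        rw [show x + t • u - xp - (x - xp) = t • u from by abel] at h1
        rw [norm_smul, Real.norm_eq_abs] at h1
        rw [le_div_iff₀ hun]
        linarith
      have hbb : BddBelow {t : ℝ | ‖x + t • u - xp‖ ≤ r} :=
        ⟨-((r + ‖x - xp‖) / ‖u‖), fun t ht => (abs_le.1 (hBnd t ht)).1⟩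
      have hba : BddAbove {t : ℝ | ‖x + t • u - xp‖ ≤ r} :=
        ⟨(r + ‖x - xp‖) / ‖u‖, fun t ht => (abs_le.1 (hBnd t ht)).2⟩
      have hk₁S : sInf {t : ℝ | ‖x + t • u - xp‖ ≤ r} ∈ {t : ℝ | ‖x + t • u - xp‖ ≤ r} :=
        hSclosed.csInf_mem hS hbb
      have hk₂S : sSup {t : ℝ | ‖x + t • u - xp‖ ≤ r} ∈ {t : ℝ | ‖x + t • u - xp‖ ≤ r} :=
        hSclosed.csSup_mem hS hba
      have hk : sInf {t : ℝ | ‖x + t • u - xp‖ ≤ r} ≤ sSup {t : ℝ | ‖x + t • u - xp‖ ≤ r} :=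
        csInf_le_csSup hS hbb hba
      have hconv : Convex ℝ {t : ℝ | ‖x + t • u - xp‖ ≤ r} := by
        intro t₁ ht₁ t₂ ht₂ a b ha hb hab
        have h₁ : ‖x + t₁ • u - xp‖ ≤ r := ht₁
        have h₂ : ‖x + t₂ • u - xp‖ ≤ r := ht₂
        have hzeq : x + (a * t₁ + b * t₂) • u - xp
            = a • (x + t₁ • u - xp) + b • (x + t₂ • u - xp) := by
          have h3 : x + (a * t₁ + b * t₂) • u - xp
              = (a + b) • (x - xp) + (a * t₁ + b * t₂) • u := by
            rw [hab, one_smul]; abel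
          rw [h3]
          module
        show ‖x + (a • t₁ + b • t₂) • u - xp‖ ≤ r
        rw [smul_eq_mul, smul_eq_mul, hzeq]
        calc ‖a • (x + t₁ • u - xp) + b • (x + t₂ • u - xp)‖
            ≤ ‖a • (x + t₁ • u - xp)‖ + ‖b • (x + t₂ • u - xp)‖ := norm_add_le _ _
          _ = a * ‖x + t₁ • u - xp‖ + b * ‖x + t₂ • u - xp‖ := by
              rw [norm_smul, norm_smul, Real.norm_eq_abs, Real.norm_eq_abs,
                abs_of_nonneg ha, abs_of_nonneg hb]
          _ ≤ a * r + b * r := add_le_add (mul_le_mul_of_nonneg_left h₁ ha)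
              (mul_le_mul_of_nonneg_left h₂ hb)
          _ = r := by rw [← add_mul, hab, one_mul]
      have hIccS : Icc (sInf {t : ℝ | ‖x + t • u - xp‖ ≤ r})
          (sSup {t : ℝ | ‖x + t • u - xp‖ ≤ r}) ⊆ {t : ℝ | ‖x + t • u - xp‖ ≤ r} :=
        hconv.ordConnected.out hk₁S hk₂S
      have hlow : ∀ t : ℝ, t < sInf {t : ℝ | ‖x + t • u - xp‖ ≤ r} →
          r < ‖x + t • u - xp‖ := by
        intro t ht
        by_contra hc
        have hmem : t ∈ {t : ℝ | ‖x + t • u - xp‖ ≤ r} := not_lt.1 hc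
        exact absurd (csInf_le hbb hmem) (not_le.2 ht)
      have hhigh : ∀ t : ℝ, sSup {t : ℝ | ‖x + t • u - xp‖ ≤ r} < t →
          r < ‖x + t • u - xp‖ := by
        intro t ht
        by_contra hc
        have hmem : t ∈ {t : ℝ | ‖x + t • u - xp‖ ≤ r} := not_lt.1 hc
        exact absurd (le_csSup hba hmem) (not_le.2 ht)
      have hm₁ : MonotoneOn χ (Iic (sInf {t : ℝ | ‖x + t • u - xp‖ ≤ r})) := by
        refine monotoneOn_of_deriv_nonneg (convex_Iic _) hχcont.continuousOn ?_ ?_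
        · intro t ht
          rw [interior_Iic, mem_Iio] at ht
          obtain ⟨D, hD, _⟩ := hout t (hlow t ht)
          exact hD.differentiableAt.differentiableWithinAt
        · intro t ht
          rw [interior_Iic, mem_Iio] at ht
          obtain ⟨D, hD, h0⟩ := hout t (hlow t ht)
          rw [hD.deriv]; exact h0
      have hm₃ : MonotoneOn χ (Ici (sSup {t : ℝ | ‖x + t • u - xp‖ ≤ r})) := by
        refine monotoneOn_of_deriv_nonneg (convex_Ici _) hχcont.continuousOn ?_ ?_
        · intro t ht
          rw [interior_Ici, mem_Ioi] at ht
          obtain ⟨D, hD, _⟩ := hout t (hhigh t ht)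
          exact hD.differentiableAt.differentiableWithinAt
        · intro t ht
          rw [interior_Ici, mem_Ioi] at ht
          obtain ⟨D, hD, h0⟩ := hout t (hhigh t ht)
          rw [hD.deriv]; exact h0
      have hder2 : ∀ t ∈ Ioo (sInf {t : ℝ | ‖x + t • u - xp‖ ≤ r})
          (sSup {t : ℝ | ‖x + t • u - xp‖ ≤ r}), HasDerivAt χ
          (⟪(f'' (x + t • u)) u, u⟫ - σ / 2 * ‖u‖ ^ 2) t := by
        intro t ht
        have hev : χ =ᶠ[nhds t] fun s : ℝ =>
            ⟪f' (x + s • u), u⟫ - σ / 2 * ⟪x + s • u - xp, u⟫ := by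
          filter_upwards [Ioo_mem_nhds ht.1 ht.2] with s hs
          have hsS : ‖x + s • u - xp‖ ≤ r := hIccS (Ioo_subset_Icc_self hs)
          rw [hχeq s, max_eq_right (by linarith)]
          simp
        exact (hin t).congr_of_eventuallyEq hev
      have hm₂ : MonotoneOn χ (Icc (sInf {t : ℝ | ‖x + t • u - xp‖ ≤ r})
          (sSup {t : ℝ | ‖x + t • u - xp‖ ≤ r})) := by
        refine monotoneOn_of_deriv_nonneg (convex_Icc _ _) hχcont.continuousOn ?_ ?_
        · intro t ht
          rw [interior_Icc] at ht
          exact (hder2 t ht).differentiableAt.differentiableWithinAt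
        · intro t ht
          rw [interior_Icc] at ht
          rw [(hder2 t ht).deriv]
          exact hinpos t (hIccS (Ioo_subset_Icc_self ht))
      exact glue_mono hk hm₁ hm₂ hm₃
    · have hallout : ∀ t : ℝ, r < ‖x + t • u - xp‖ := by
        intro t
        by_contra hc
        exact hS ⟨t, not_lt.1 hc⟩
      have hdiff : Differentiable ℝ χ := fun t =>
        ((hout t (hallout t)).choose_spec.1).differentiableAt
      refine monotone_of_deriv_nonneg hdiff fun t => ?_
      obtain ⟨D, hD, h0⟩ := hout t (hallout t)
      rw [hD.deriv]
      exact h0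
  -- conclusion
  have hΦd : ∀ t : ℝ, HasDerivAt
      (fun s : ℝ => fp (x + s • u) - σ / 4 * ‖x + s • u - xp‖ ^ 2 - s * χ 0)
      (⟪fp' (x + t • u), u⟫ - σ / 4 * (2 * ⟪x + t • u - xp, u⟫) - χ 0) t := by
    intro t
    exact ((hfpz t).sub ((hq' t).const_mul (σ / 4))).sub
      (by simpa using (hasDerivAt_id t).mul_const (χ 0))
  have hΦmono : MonotoneOn
      (fun s : ℝ => fp (x + s • u) - σ / 4 * ‖x + s • u - xp‖ ^ 2 - s * χ 0) (Ici 0) := by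
    refine monotoneOn_of_deriv_nonneg (convex_Ici 0) ?_ ?_ ?_
    · exact (Continuous.continuousOn (by
        exact ((continuous_iff_continuousAt.2 fun t => ((hΦd t).continuousAt)))))
    · intro t ht
      exact (hΦd t).differentiableAt.differentiableWithinAt
    · intro t ht
      rw [interior_Ici, mem_Ioi] at ht
      rw [(hΦd t).deriv]
      have hle : χ 0 ≤ χ t := hmono ht.le
      have : ⟪fp' (x + t • u), u⟫ - σ / 4 * (2 * ⟪x + t • u - xp, u⟫) - χ 0 = χ t - χ 0 := by
        rw [hχdef]; ring
      rw [this]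
      linarith
  have hfin := hΦmono (self_mem_Ici) (mem_Ici.2 zero_le_one) zero_le_one
  simp only [zero_smul, add_zero, one_smul, zero_mul, one_mul, sub_zero] at hfin
  have hxy : x + u = y := by rw [hudef]; abel
  rw [hxy] at hfin
  have hχ0 : χ 0 = ⟪fp' x, u⟫ - σ / 2 * ⟪x - xp, u⟫ := by
    rw [hχdef]; simp
  have hsq : ‖y - xp‖ ^ 2 = ‖x - xp‖ ^ 2 + 2 * ⟪x - xp, u⟫ + ‖u‖ ^ 2 := by
    have hyd : y - xp = (x - xp) + u := by rw [hudef]; abel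
    rw [hyd, norm_add_sq_real]
  rw [hχ0, hsq] at hfin
  linarith
end
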